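/- arXiv:2508.16813 — 2 statements merged into one kernel-verified Lean document; each statement's English description precedes it below -/
import Mathlib

section
/- For any real y > 0 and even integer k ≥ 4, one has the identity (Γ(k)/(4π y)^k) · Σ_{n ∈ ℤ} (1 + in/(2y))^{-k} = Σ_{m=1}^{∞} m^{k-1} e^{-4π m y}. -/
open Real Complex

open MeasureTheory Set Filter FourierTransform Asymptotics


lemma aux_integrable (n : ℕ) {c : ℂ} (hc : 0 < c.re) :
    IntegrableOn (fun t : ℝ => (t:ℂ)^n * Complex.exp (-(c*t))) (Set.Ioi 0) := by
  have h := integrableOn_rpow_mul_exp_neg_mul_rpow (s := (n:ℝ)) (p := 1)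
    (neg_one_lt_zero.trans_le (Nat.cast_nonneg n)) zero_lt_one hc
  refine Integrable.mono' h ?_ ?_
  · exact (Continuous.mul (by fun_prop) (by fun_prop)).aestronglyMeasurable
  · filter_upwards [ae_restrict_mem measurableSet_Ioi] with t ht
    rw [norm_mul, norm_pow, Complex.norm_exp]
    simp only [Complex.norm_real, Complex.neg_re, Complex.mul_re, Complex.ofReal_re,
      Complex.ofReal_im, mul_zero, sub_zero]
    rw [Real.rpow_natCast, Real.rpow_one, Real.norm_eq_abs, abs_of_pos ht, neg_mul]


lemma aux_deriv (m : ℕ) (c : ℂ) (t : ℝ) :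
    HasDerivAt (fun t : ℝ => (t:ℂ)^m * Complex.exp (-(c*t)))
      ((m : ℂ) * (t:ℂ)^(m-1) * Complex.exp (-(c*t)) - c * ((t:ℂ)^m * Complex.exp (-(c*t)))) t := by
  have h1 : HasDerivAt (fun t : ℝ => ((t:ℝ):ℂ)) 1 t := by
    simpa using (hasDerivAt_id t).ofReal_comp
  have h2 : HasDerivAt (fun t : ℝ => Complex.exp (-(c*t))) (Complex.exp (-(c*t)) * (-(c*1))) t :=
    ((h1.const_mul c).neg).cexp
  have h3 : HasDerivAt (fun t : ℝ => ((t:ℝ):ℂ)^m) ((m:ℂ) * ((t:ℝ):ℂ)^(m-1)) t :=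
    (hasDerivAt_pow m ((t:ℝ):ℂ)).comp_ofReal
  have := h3.mul h2
  refine this.congr_deriv ?_
  ring

lemma aux_tendsto (m : ℕ) {c : ℂ} (hc : 0 < c.re) :
    Tendsto (fun t : ℝ => (t:ℂ)^m * Complex.exp (-(c*t))) atTop (nhds 0) := by
  rw [tendsto_zero_iff_norm_tendsto_zero]
  have h := (isLittleO_pow_exp_pos_mul_atTop m hc).tendsto_div_nhds_zero
  apply h.congr'
  filter_upwards [eventually_ge_atTop (0:ℝ)] with t ht
  rw [div_eq_mul_inv, ← Real.exp_neg, norm_mul, norm_pow,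
    Complex.norm_exp, Complex.norm_real, Real.norm_eq_abs, _root_.abs_of_nonneg ht]
  simp [Complex.mul_re]

lemma aux_integral (n : ℕ) {c : ℂ} (hc : 0 < c.re) :
    ∫ t in Set.Ioi (0:ℝ), (t:ℂ)^n * Complex.exp (-(c*t)) = (n.factorial : ℂ) / c^(n+1) := by
  have hc0 : c ≠ 0 := fun h => by simp [h] at hc
  induction n with
  | zero =>
    have key := integral_Ioi_of_hasDerivAt_of_tendsto' (a := 0) (m := 0)
      (f := fun t : ℝ => -c⁻¹ * Complex.exp (-(c*t)))
      (f' := fun t : ℝ => Complex.exp (-(c*t)))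
      (fun x _ => by
        have := ((((hasDerivAt_id x).ofReal_comp).const_mul c).neg).cexp.const_mul (-c⁻¹)
        simp only [mul_one, id_eq] at this ⊢
        refine this.congr_deriv ?_
        rw [Pi.neg_apply, Complex.ofReal_one, mul_one]
        field_simp)
      (by simpa using aux_integrable 0 hc)
      (by simpa using (aux_tendsto 0 hc).const_mul (-c⁻¹))
    simp only [Complex.ofReal_zero, mul_zero, neg_zero, Complex.exp_zero, mul_one] at key
    simpa using key
  | succ n ih =>
    have key := integral_Ioi_of_hasDerivAt_of_tendsto' (a := 0) (m := 0)
      (f := fun t : ℝ => ((t:ℝ):ℂ)^(n+1) * Complex.exp (-(c*t)))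
      (f' := fun t : ℝ => ((n:ℂ)+1) * (((t:ℝ):ℂ)^n * Complex.exp (-(c*t)))
        - c * (((t:ℝ):ℂ)^(n+1) * Complex.exp (-(c*t))))
      (fun x _ => by
        have := aux_deriv (n+1) c x
        refine this.congr_deriv ?_
        push_cast
        ring)
      (((aux_integrable n hc).const_mul _).sub ((aux_integrable (n+1) hc).const_mul c))
      (aux_tendsto (n+1) hc)
    rw [MeasureTheory.integral_sub ((aux_integrable n hc).const_mul _)
        ((aux_integrable (n+1) hc).const_mul c),
      MeasureTheory.integral_const_mul, MeasureTheory.integral_const_mul, ih] at key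
    simp only [Complex.ofReal_zero, mul_zero, neg_zero, Complex.exp_zero, mul_one,
      zero_pow (Nat.succ_ne_zero n), zero_mul, zero_sub, neg_zero, sub_zero] at key
    have hkey : c * ∫ t in Set.Ioi (0:ℝ), ((t:ℝ):ℂ)^(n+1) * Complex.exp (-(c*t))
        = ((n:ℂ)+1) * ((n.factorial : ℂ) / c^(n+1)) := by linear_combination -key
    have hI : (∫ t in Set.Ioi (0:ℝ), ((t:ℝ):ℂ)^(n+1) * Complex.exp (-(c*t)))
        = ((n:ℂ)+1) * (n.factorial : ℂ) / c^(n+1+1) := by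
      rw [eq_div_iff (pow_ne_zero _ hc0), pow_succ]
      calc (∫ t in Set.Ioi (0:ℝ), ((t:ℝ):ℂ)^(n+1) * Complex.exp (-(c*t))) * (c^(n+1) * c)
          = (c * ∫ t in Set.Ioi (0:ℝ), ((t:ℝ):ℂ)^(n+1) * Complex.exp (-(c*t))) * c^(n+1) := by
            ring
        _ = ((n:ℂ)+1) * ((n.factorial : ℂ) / c^(n+1)) * c^(n+1) := by rw [hkey]
        _ = ((n:ℂ)+1) * (n.factorial : ℂ) := by
            rw [mul_assoc, div_mul_cancel₀ _ (pow_ne_zero _ hc0)]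
    rw [hI, Nat.factorial_succ]
    push_cast
    ring

noncomputable def f0 (y : ℝ) (k : ℕ) : ℝ → ℂ :=
  fun t => ((max t 0 : ℝ) : ℂ)^(k-1) * Complex.exp (-(((4*π*y : ℝ) : ℂ) * t))

lemma f0_cont (y : ℝ) (k : ℕ) : Continuous (f0 y k) := by
  unfold f0
  exact ((Complex.continuous_ofReal.comp (continuous_id.max continuous_const)).pow _).mul
    (Complex.continuous_exp.comp (by fun_prop))

lemma f0_nonpos {y : ℝ} {k : ℕ} (hk : 4 ≤ k) {t : ℝ} (ht : t ≤ 0) : f0 y k t = 0 := by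
  unfold f0
  rw [max_eq_right ht]
  simp [zero_pow (show k - 1 ≠ 0 by omega)]

lemma f0_pos {y : ℝ} {k : ℕ} {t : ℝ} (ht : 0 ≤ t) :
    f0 y k t = (t:ℂ)^(k-1) * Complex.exp (-(((4*π*y : ℝ) : ℂ) * t)) := by
  unfold f0
  rw [max_eq_left ht]

lemma fourier_f0 {y : ℝ} (hy : 0 < y) {k : ℕ} (hk : 4 ≤ k) (ξ : ℝ) :
    𝓕 (f0 y k) ξ = ((k-1).factorial : ℂ) / (((4*π*y : ℝ) : ℂ) + ((2*π*ξ : ℝ) : ℂ) * Complex.I)^k := by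
  have hπ := Real.pi_pos
  set c : ℂ := ((4*π*y : ℝ) : ℂ) + ((2*π*ξ : ℝ) : ℂ) * Complex.I with hc
  have hcre : 0 < c.re := by
    simp only [hc, Complex.add_re, Complex.ofReal_re, Complex.mul_re, Complex.I_re, mul_zero,
      Complex.ofReal_im, Complex.I_im, mul_one, zero_sub, neg_zero, add_zero, sub_zero]
    positivity
  rw [Real.fourier_real_eq_integral_exp_smul]
  rw [← MeasureTheory.setIntegral_eq_integral_of_forall_compl_eq_zero
    (s := Set.Ioi (0:ℝ)) (fun v hv => by
      rw [f0_nonpos hk (by simpa using hv), smul_zero])]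
  rw [MeasureTheory.setIntegral_congr_fun measurableSet_Ioi
    (g := fun t : ℝ => (t:ℂ)^(k-1) * Complex.exp (-(c*t)))
    (fun v hv => by
      rw [f0_pos (le_of_lt hv), smul_eq_mul]
      have hexpo : (-(((4*π*y : ℝ) : ℂ) * v)) + (((-2*π*v*ξ : ℝ) : ℂ) * Complex.I) = -(c*v) := by
        rw [hc]
        push_cast
        ring
      rw [mul_comm, mul_assoc, ← Complex.exp_add, hexpo])]
  rw [aux_integral (k-1) hcre]
  congr 2
  omega

lemma f0_decay {y : ℝ} (hy : 0 < y) {k : ℕ} (hk : 4 ≤ k) :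
    (f0 y k) =O[Filter.cocompact ℝ] (fun x : ℝ => |x| ^ (-(2:ℝ))) := by
  have hπ := Real.pi_pos
  rw [cocompact_eq_atBot_atTop, Asymptotics.isBigO_sup]
  constructor
  · refine Filter.EventuallyEq.trans_isBigO ?_ (Asymptotics.isBigO_zero _ _)
    filter_upwards [Filter.eventually_le_atBot (0:ℝ)] with x hx
    exact f0_nonpos hk hx
  · have h4 : 0 < 4*π*y := by positivity
    have h := (isLittleO_pow_exp_pos_mul_atTop (k+1) h4).tendsto_div_nhds_zero
    have hev : ∀ᶠ x : ℝ in Filter.atTop, x^(k+1) / Real.exp (4*π*y*x) ≤ 1 :=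
      (h.eventually_lt_const one_pos).mono fun x hx => hx.le
    rw [Asymptotics.isBigO_iff]
    refine ⟨1, ?_⟩
    filter_upwards [hev, Filter.eventually_ge_atTop (1:ℝ)] with x hx hx1
    have hx0 : 0 < x := lt_of_lt_of_le one_pos hx1
    have hnorm : ‖f0 y k x‖ = x^(k-1) * Real.exp (-(4*π*y*x)) := by
      rw [f0_pos hx0.le, norm_mul, norm_pow,
        Complex.norm_exp, Complex.norm_real, Real.norm_eq_abs, _root_.abs_of_pos hx0]
      congr 2
      simp [Complex.mul_re]
    have hrhs : ‖|x| ^ (-(2:ℝ))‖ = (x^2)⁻¹ := by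
      rw [Real.norm_eq_abs, _root_.abs_of_nonneg (Real.rpow_nonneg (abs_nonneg x) _),
        _root_.abs_of_pos hx0, Real.rpow_neg hx0.le,
        show ((2:ℝ)) = ((2:ℕ):ℝ) by norm_num, Real.rpow_natCast]
    rw [hnorm, hrhs, one_mul]
    have key : x^(k+1) * Real.exp (-(4*π*y*x)) ≤ 1 := by
      rw [Real.exp_neg, ← div_eq_mul_inv]
      exact hx
    calc x^(k-1) * Real.exp (-(4*π*y*x))
        = (x^(k+1) * Real.exp (-(4*π*y*x))) / x^2 := by
          rw [show k+1 = (k-1)+2 by omega, pow_add]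
          field_simp
        _ ≤ 1 / x^2 := by gcongr
        _ = (x^2)⁻¹ := one_div _

lemma f0_fourier_summable {y : ℝ} (hy : 0 < y) {k : ℕ} (hk : 4 ≤ k) :
    Summable (fun n : ℤ => 𝓕 (f0 y k) (n:ℝ)) := by
  have hπ := Real.pi_pos
  apply summable_of_isBigO (Real.summable_one_div_int_pow.mpr (by norm_num : 1 < 2))
  rw [Asymptotics.isBigO_iff]
  refine ⟨(k-1).factorial, ?_⟩
  filter_upwards [Set.Finite.eventually_cofinite_notMem (Set.finite_singleton (0:ℤ))] with n hn
  have hn0 : n ≠ 0 := by simpa using hn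
  rw [fourier_f0 hy hk]
  have h1 : (1:ℝ) ≤ |(n:ℝ)| := by exact_mod_cast Int.one_le_abs hn0
  set c : ℂ := ((4*π*y : ℝ) : ℂ) + ((2*π*(n:ℝ) : ℝ) : ℂ) * Complex.I with hc
  have him : |(n:ℝ)| ≤ ‖c‖ := by
    have := Complex.abs_im_le_norm c
    have him2 : c.im = 2*π*(n:ℝ) := by simp [hc]
    rw [him2] at this
    refine le_trans ?_ this
    rw [abs_mul, _root_.abs_of_pos (by positivity : (0:ℝ) < 2*π)]
    exact le_mul_of_one_le_left (abs_nonneg _) (by nlinarith [Real.pi_gt_three])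
  have hpow : |(n:ℝ)|^2 ≤ ‖c‖^k := by
    calc |(n:ℝ)|^2 ≤ |(n:ℝ)|^k := pow_le_pow_right₀ h1 (by omega)
      _ ≤ ‖c‖^k := pow_le_pow_left₀ (abs_nonneg _) him k
  rw [norm_div, norm_pow]
  have hnc : ‖((k-1).factorial : ℂ)‖ = ((k-1).factorial : ℝ) := by
    simp
  rw [hnc, Real.norm_eq_abs, abs_of_pos (by positivity : (0:ℝ) < 1/(n:ℝ)^2), ← _root_.sq_abs ((n:ℝ))]
  rw [mul_one_div]
  gcongr


theorem poisson_summation_identity (y : ℝ) (hy : 0 < y) (k : ℕ) (hk : 4 ≤ k) (hke : Even k) :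
    (Real.Gamma k : ℂ) / ((4 * π * y) ^ k) *
        ∑' n : ℤ, (1 + Complex.I * (n : ℂ) / (2 * y)) ^ (-(k : ℤ)) =
      ∑' m : ℕ, ((m : ℂ) + 1) ^ (k - 1) * Complex.exp (-(4 * π * ((m : ℂ) + 1) * y)) := by
  have hπ := Real.pi_pos
  have hp := Real.tsum_eq_tsum_fourier_of_rpow_decay_of_summable (f0_cont y k)
    (by norm_num : (1:ℝ) < 2) (f0_decay hy hk) (f0_fourier_summable hy hk) 0
  simp only [zero_add, QuotientAddGroup.mk_zero, fourier_eval_zero, mul_one] at hp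
  have hR : ∑' n : ℤ, f0 y k (n:ℝ)
      = ∑' m : ℕ, ((m:ℂ)+1)^(k-1) * Complex.exp (-(4*π*((m:ℂ)+1)*y)) := by
    rw [← Function.Injective.tsum_eq (g := fun m : ℕ => (m:ℤ)+1)
      (fun a b h => by simp only [add_left_inj, Int.natCast_inj] at h; exact h) (f := fun n : ℤ => f0 y k (n:ℝ)) ?_]
    · apply tsum_congr
      intro m
      have hm : (0:ℝ) ≤ ((((m:ℤ)+1 : ℤ)):ℝ) := by push_cast; positivity
      rw [f0_pos hm]
      congr 1
      · push_cast
        ring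
      · congr 1
        push_cast
        ring
    · intro n hn
      simp only [Function.mem_support, ne_eq] at hn
      by_contra hmem
      apply hn
      apply f0_nonpos hk
      have hle : n ≤ 0 := by
        by_contra h
        push_neg at h
        exact hmem ⟨(n-1).toNat, by show ((n-1).toNat : ℤ) + 1 = n; omega⟩
      exact_mod_cast hle
  obtain ⟨j, rfl⟩ : ∃ j, k = j + 1 := ⟨k-1, by omega⟩
  have hGamma : (Real.Gamma (j+1 : ℕ) : ℂ) = (((j+1)-1).factorial : ℂ) := by
    rw [show (((j+1:ℕ)):ℝ) = (j:ℝ)+1 by push_cast; ring, Real.Gamma_nat_eq_factorial]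
    norm_num
  have hterm : ∀ n : ℤ, 𝓕 (f0 y (j+1)) (n:ℝ)
      = (Real.Gamma (j+1 : ℕ) : ℂ) / ((4 * (π:ℂ) * (y:ℂ)) ^ (j+1))
        * (1 + Complex.I * (n:ℂ) / (2*(y:ℂ))) ^ (-((j+1 : ℕ) : ℤ)) := by
    intro n
    rw [fourier_f0 hy hk]
    have hy0 : (y:ℂ) ≠ 0 := Complex.ofReal_ne_zero.mpr hy.ne'
    have hfact : (((4*π*y : ℝ)):ℂ) + ((2*π*((n:ℤ):ℝ) : ℝ):ℂ) * Complex.I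
        = ((4:ℂ) * (π:ℂ) * (y:ℂ)) * (1 + Complex.I * (n:ℂ) / (2*(y:ℂ))) := by
      push_cast
      field_simp
      ring
    rw [hfact, mul_pow, hGamma, zpow_neg, zpow_natCast, div_mul_eq_div_div, div_eq_mul_inv]
  have hL : ∑' n : ℤ, 𝓕 (f0 y (j+1)) (n:ℝ)
      = (Real.Gamma ((j+1 : ℕ)) : ℂ) / ((4 * (π:ℂ) * (y:ℂ)) ^ (j+1))
        * ∑' n : ℤ, (1 + Complex.I * (n:ℂ) / (2*(y:ℂ))) ^ (-((j+1 : ℕ) : ℤ)) := by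
    rw [tsum_congr hterm, tsum_mul_left]
  rw [← hL, ← hp]
  exact hR
end

section
/- Let κ ≥ 1/2 be real, Y > 0, and 0 < Δ < 1. Then Σ over natural numbers m with |m - κ/Y| > Δ·κ/Y of m^κ e^{-Y m} is at most C·(1/Δ + κ)·(1/Y)·(κ/(eY))^κ·exp(-Δ²κ/4) for some absolute constant C > 0. -/
open Real


lemma aux_log_tangent {x u : ℝ} (hx : 0 < x) (hu : 0 < u) :
    Real.log x ≤ Real.log u + (x - u) / u := by
  have h := Real.log_le_sub_one_of_pos (x := x / u) (by positivity)
  rw [Real.log_div hx.ne' hu.ne'] at h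
  have hh : x / u - 1 = (x - u) / u := by field_simp
  linarith [hh ▸ h]

lemma aux_log_one_sub {Δ : ℝ} (h1 : 0 < Δ) (h2 : Δ < 1) :
    Real.log (1 - Δ) + Δ ≤ -Δ ^ 2 / 4 := by
  have hw : (0:ℝ) < 1 - Δ := by linarith
  have hlog : Real.log (1 - Δ) = 2 * Real.log (Real.sqrt (1 - Δ)) := by
    rw [Real.log_sqrt hw.le]; ring
  have h3 : Real.log (Real.sqrt (1 - Δ)) ≤ Real.sqrt (1 - Δ) - 1 :=
    Real.log_le_sub_one_of_pos (Real.sqrt_pos.2 hw)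
  have h5 : Real.sqrt (1 - Δ) ≤ 1 - Δ/2 - Δ^2/8 := by
    have : (1 - Δ) ≤ (1 - Δ/2 - Δ^2/8)^2 := by nlinarith [sq_nonneg Δ, pow_pos h1 3, pow_pos h1 4]
    calc Real.sqrt (1 - Δ) ≤ Real.sqrt ((1 - Δ/2 - Δ^2/8)^2) := Real.sqrt_le_sqrt this
    _ = 1 - Δ/2 - Δ^2/8 := Real.sqrt_sq (by nlinarith)
  linarith

lemma aux_log_one_add {Δ : ℝ} (h1 : 0 < Δ) (h2 : Δ ≤ 1) :
    Real.log (1 + Δ) - Δ ≤ -Δ ^ 2 / 4 := by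
  have hy : 0 < Δ - Δ ^ 2 / 4 := by nlinarith
  set v : ℝ := (Δ - Δ ^ 2 / 4) / 5 with hv5
  have hv0 : 0 < v := by positivity
  have hkey : 1 + Δ ≤ Real.exp (Δ - Δ ^ 2 / 4) := by
    have h5 : Real.exp (Δ - Δ ^ 2 / 4) = (Real.exp v) ^ 5 := by
      rw [← Real.exp_nat_mul]; congr 1; push_cast; rw [hv5]; ring
    have h6 : 1 + v ≤ Real.exp v := by linarith [Real.add_one_le_exp v]
    have h7 : (1 + v) ^ 5 ≤ (Real.exp v) ^ 5 := by
      apply pow_le_pow_left₀ (by linarith) h6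
    have hq : (0:ℝ) ≤ 120 - 96*Δ - 28*Δ^2 + 12*Δ^3 - Δ^4 := by
      nlinarith [mul_nonneg (by linarith : (0:ℝ) ≤ 1 - Δ)
        (by nlinarith : (0:ℝ) ≤ Δ^3 - 11*Δ^2 + 17*Δ + 113)]
    have h9 : 10*v^2 + 10*v^3 - Δ^2/4
        = Δ^2 * (120 - 96*Δ - 28*Δ^2 + 12*Δ^3 - Δ^4) / 800 := by
      rw [hv5]; ring
    have hexp : (1 + v)^5 = 1 + 5*v + 10*v^2 + 10*v^3 + 5*v^4 + v^5 := by ring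
    have h8 : 1 + Δ ≤ (1 + v) ^ 5 := by
      have hvΔ : 5 * v = Δ - Δ^2/4 := by rw [hv5]; ring
      nlinarith [pow_pos hv0 4, pow_pos hv0 5, mul_nonneg (sq_nonneg Δ) hq]
    linarith [h5 ▸ h7]
  have := (Real.log_le_iff_le_exp (by linarith : (0:ℝ) < 1 + Δ)).2 hkey
  linarith

lemma aux_recip {a : ℝ} (ha : 0 < a) : (1 - Real.exp (-a))⁻¹ ≤ 1 + 1 / a := by
  have h1 : Real.exp (-a) ≤ (1 + a)⁻¹ := by
    rw [Real.exp_neg]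
    exact inv_anti₀ (by linarith) (by linarith [Real.add_one_le_exp a])
  have heq : 1 - (1+a)⁻¹ = a / (1+a) := by field_simp; ring
  have h2 : a / (1 + a) ≤ 1 - Real.exp (-a) := by linarith
  have h3 : (0:ℝ) < a / (1 + a) := by positivity
  calc (1 - Real.exp (-a))⁻¹ ≤ (a / (1 + a))⁻¹ := inv_anti₀ h3 h2
  _ = 1 + 1 / a := by field_simp; ring

lemma aux_sinh {a : ℝ} (ha : 0 < a) :
    Real.exp (-(a/2)) * (1 - Real.exp (-a))⁻¹ ≤ 1 / a := by
  have hs : a / 2 < Real.sinh (a/2) := Real.self_lt_sinh_iff.2 (by positivity)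
  rw [Real.sinh_eq] at hs
  have he : (0:ℝ) < Real.exp (a/2) := Real.exp_pos _
  have hlt : Real.exp (-a) < 1 := Real.exp_lt_one_iff.2 (by linarith)
  have hpos : (0:ℝ) < 1 - Real.exp (-a) := by linarith
  rw [mul_inv_le_iff₀ hpos]
  -- goal: exp(-(a/2)) ≤ 1/a * (1 - exp(-a))
  have hid : Real.exp (-a) = Real.exp (-(a/2)) * Real.exp (-(a/2)) := by
    rw [← Real.exp_add]; ring_nf
  have hinv : Real.exp (-(a/2)) = (Real.exp (a/2))⁻¹ := Real.exp_neg _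
  have hE : a < Real.exp (a/2) - Real.exp (-(a/2)) := by linarith
  have hmul := mul_lt_mul_of_pos_right hE (Real.exp_pos (-(a/2)))
  have hprod : Real.exp (a/2) * Real.exp (-(a/2)) = 1 := by
    rw [← Real.exp_add]; simp
  rw [one_div, inv_mul_eq_div, le_div_iff₀ ha]
  nlinarith [hmul, hid, hprod]

lemma left_exponent_bound {κ Y Δ : ℝ} (hκ : 0 < κ) (hY : 0 < Y) (hΔ : 0 < Δ) (hΔ1 : Δ < 1)
    {x : ℝ} (hx : 0 < x) (hxle : x ≤ (1 - Δ) * (κ / Y)) :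
    κ * Real.log x - Y * x ≤ κ * (Real.log (κ / Y) - 1) - Δ ^ 2 * κ / 4 := by
  set m₀ := κ / Y with hm₀
  have hm₀pos : 0 < m₀ := div_pos hκ hY
  set u := (1 - Δ) * m₀ with hu
  have hΔ1' : (0:ℝ) < 1 - Δ := by linarith
  have hupos : 0 < u := by positivity
  have h1 := aux_log_tangent hx hupos
  have h1κ : κ * Real.log x ≤ κ * Real.log u + κ * ((x - u) / u) := by
    nlinarith [mul_le_mul_of_nonneg_left h1 hκ.le]
  have hdiv : u * ((x - u) / u) = x - u := by field_simp
  have hud : κ = Y / (1 - Δ) * u := by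
    rw [hu, hm₀]; field_simp
  have e1 : κ * ((x - u) / u) = Y / (1 - Δ) * (x - u) := by
    calc κ * ((x - u) / u) = Y / (1 - Δ) * u * ((x - u) / u) := by rw [← hud]
    _ = Y / (1 - Δ) * (x - u) := by rw [mul_assoc, hdiv]
  have h2 : Y / (1 - Δ) * (x - u) ≤ Y * (x - u) := by
    have hxu : x - u ≤ 0 := by linarith
    have hge : Y ≤ Y / (1 - Δ) := by
      rw [le_div_iff₀ hΔ1']; nlinarith
    nlinarith
  have hYu : Y * u = (1 - Δ) * κ := by
    rw [hu, hm₀]; field_simp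
  have hlogu : Real.log u = Real.log (1 - Δ) + Real.log m₀ := by
    rw [hu]; exact Real.log_mul (by linarith) hm₀pos.ne'
  have h3 : κ * (Real.log (1 - Δ) + Δ) ≤ κ * (-Δ ^ 2 / 4) :=
    mul_le_mul_of_nonneg_left (aux_log_one_sub hΔ hΔ1) hκ.le
  nlinarith [h1κ, e1, h2, h3, hYu, hlogu]

lemma right_exponent_bound {κ Y Δ : ℝ} (hκ : 0 < κ) (hY : 0 < Y) (hΔ : 0 < Δ) (hΔ1 : Δ < 1)
    {x : ℝ} (hx : (1 + Δ) * (κ / Y) < x) :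
    κ * Real.log x - Y * x ≤ κ * (Real.log (κ / Y) - 1) - Δ ^ 2 * κ / 4
      - (Δ * Y / (1 + Δ)) * (x - (1 + Δ) * (κ / Y)) := by
  set m₀ := κ / Y with hm₀
  have hm₀pos : 0 < m₀ := div_pos hκ hY
  set s := (1 + Δ) * m₀ with hs
  have hΔ1' : (0:ℝ) < 1 + Δ := by linarith
  have hspos : 0 < s := by positivity
  have hxpos : 0 < x := lt_trans hspos hx
  have h1 := aux_log_tangent hxpos hspos
  have h1κ : κ * Real.log x ≤ κ * Real.log s + κ * ((x - s) / s) := by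
    nlinarith [mul_le_mul_of_nonneg_left h1 hκ.le]
  have hdiv : s * ((x - s) / s) = x - s := by field_simp
  have hud : κ = Y / (1 + Δ) * s := by
    rw [hs, hm₀]; field_simp
  have e1 : κ * ((x - s) / s) = Y / (1 + Δ) * (x - s) := by
    calc κ * ((x - s) / s) = Y / (1 + Δ) * s * ((x - s) / s) := by rw [← hud]
    _ = Y / (1 + Δ) * (x - s) := by rw [mul_assoc, hdiv]
  have e2 : (Δ * Y / (1 + Δ)) * (x - s) = Y * (x - s) - Y / (1 + Δ) * (x - s) := by
    field_simp; ring
  have hYs : Y * s = (1 + Δ) * κ := by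
    rw [hs, hm₀]; field_simp
  have hlogs : Real.log s = Real.log (1 + Δ) + Real.log m₀ := by
    rw [hs]; exact Real.log_mul (by linarith) hm₀pos.ne'
  have h3 : κ * (Real.log (1 + Δ) - Δ) ≤ κ * (-Δ ^ 2 / 4) :=
    mul_le_mul_of_nonneg_left (aux_log_one_add hΔ hΔ1.le) hκ.le
  nlinarith [h1κ, e1, e2, h3, hYs, hlogs]

lemma aux_Qbound {Y Δ m₀ a s' X : ℝ} {M : ℕ}
    (hY : 0 < Y) (hΔ : 0 < Δ) (hΔ1 : Δ < 1) (hm₀ : 0 < m₀)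
    (hadef : a = Δ * Y / (1 + Δ)) (hs'def : s' = (1 + Δ) * m₀)
    (hsM : s' ≤ (M : ℝ)) (hM1 : 1 ≤ M)
    (hMmin : s' ≤ 1 → M ≤ 1)
    (hXdef : X = Real.exp (-(a * ((M : ℝ) - s')))) :
    X * (1 - Real.exp (-a))⁻¹ ≤ 4 * m₀ + 2 / (Δ * Y) := by
  have ha : 0 < a := by rw [hadef]; positivity
  have hra : Real.exp (-a) < 1 := Real.exp_lt_one_iff.2 (by linarith)
  have hrpos : (0:ℝ) < 1 - Real.exp (-a) := by linarith
  have hrinv : (0:ℝ) ≤ (1 - Real.exp (-a))⁻¹ := (inv_pos.2 hrpos).le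
  have hinva : 1 / a ≤ 2 / (Δ * Y) := by
    have he : 1 / a = (1 + Δ) / (Δ * Y) := by
      rw [hadef]; field_simp
    rw [he]
    exact (div_le_div_iff_of_pos_right (by positivity)).2 (by linarith)
  by_cases hc : 1 / 2 ≤ s'
  · have hX1 : X ≤ 1 := by
      rw [hXdef]
      apply Real.exp_le_one_iff.2
      nlinarith [mul_nonneg ha.le (sub_nonneg.2 hsM)]
    have h1 := aux_recip ha
    have hm4 : (1:ℝ) ≤ 4 * m₀ := by
      rw [hs'def] at hc
      nlinarith [hm₀, mul_pos (show (0:ℝ) < 1 - Δ by linarith) hm₀]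
    calc X * (1 - Real.exp (-a))⁻¹ ≤ 1 * (1 + 1 / a) :=
      mul_le_mul hX1 h1 hrinv zero_le_one
    _ = 1 + 1 / a := by ring
    _ ≤ 4 * m₀ + 2 / (Δ * Y) := by linarith
  · push_neg at hc
    have hMeq : M = 1 := le_antisymm (hMmin (by linarith)) hM1
    have hXle : X ≤ Real.exp (-(a / 2)) := by
      rw [hXdef]
      apply Real.exp_le_exp.2
      rw [hMeq]
      push_cast
      nlinarith [mul_le_mul_of_nonneg_left (show (1:ℝ)/2 ≤ 1 - s' by linarith) ha.le]
    calc X * (1 - Real.exp (-a))⁻¹ ≤ Real.exp (-(a / 2)) * (1 - Real.exp (-a))⁻¹ :=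
      mul_le_mul_of_nonneg_right hXle hrinv
    _ ≤ 1 / a := aux_sinh ha
    _ ≤ 2 / (Δ * Y) := hinva
    _ ≤ 4 * m₀ + 2 / (Δ * Y) := by
      have : (0:ℝ) ≤ 4 * m₀ := by positivity
      linarith

lemma aux_key {Y Δ κ : ℝ} (hY : 0 < Y) (hΔ : 0 < Δ) (hκ : 0 < κ) :
    (κ / Y) + (4 * (κ / Y) + 2 / (Δ * Y)) ≤ 5 * (1 / Δ + κ) * (1 / Y) := by
  have h5 : 5 * (1 / Δ + κ) * (1 / Y) = 5 / (Δ * Y) + 5 * (κ / Y) := by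
    field_simp
  have h2 : 2 / (Δ * Y) ≤ 5 / (Δ * Y) :=
    (div_le_div_iff_of_pos_right (by positivity)).2 (by norm_num)
  linarith

theorem incomplete_sum_tail_bound :
    ∃ C : ℝ, 0 < C ∧ ∀ (κ Y Δ : ℝ), 1 / 2 ≤ κ → 0 < Y → 0 < Δ → Δ < 1 →
      (∑' m : {m : ℕ // |(m : ℝ) - κ / Y| > Δ * κ / Y},
          ((m : ℕ) : ℝ) ^ κ * Real.exp (-Y * ((m : ℕ) : ℝ))) ≤
        C * (1 / Δ + κ) * (1 / Y) * (κ / (Real.exp 1 * Y)) ^ κ * Real.exp (-Δ ^ 2 * κ / 4) := by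
  refine ⟨5, by norm_num, fun κ Y Δ hκhalf hY hΔ hΔ1 => ?_⟩
  have hκ : (0:ℝ) < κ := lt_of_lt_of_le (by norm_num) hκhalf
  have hm₀ : (0:ℝ) < κ / Y := div_pos hκ hY
  set f : ℕ → ℝ := fun m => ((m:ℕ) : ℝ) ^ κ * Real.exp (-Y * (m:ℝ)) with hfdef
  have hf0 : ∀ m, 0 ≤ f m := fun m =>
    mul_nonneg (Real.rpow_nonneg (Nat.cast_nonneg m) κ) (Real.exp_pos _).le
  have hfzero : f 0 = 0 := by
    simp [hfdef, Real.zero_rpow hκ.ne']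
  -- f m = exp (κ log m - Y m) for m ≥ 1
  have hfexp : ∀ m : ℕ, 1 ≤ m → f m = Real.exp (κ * Real.log m - Y * m) := by
    intro m hm
    have hmpos : (0:ℝ) < m := by exact_mod_cast hm
    rw [hfdef]
    simp only
    rw [Real.rpow_def_of_pos hmpos, ← Real.exp_add]
    congr 1
    ring
  -- summability
  have hfsum : Summable f := by
    set n := ⌈κ⌉₊ with hn
    have hmaj : ∀ m : ℕ, f m ≤ (m:ℝ) ^ n * (Real.exp (-Y)) ^ m := by
      intro m
      rcases Nat.eq_zero_or_pos m with h0 | h1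
      · subst h0
        simp [hfzero]
      · have h1' : (1:ℝ) ≤ m := by exact_mod_cast h1
        have hr : (m:ℝ) ^ κ ≤ (m:ℝ) ^ (n:ℝ) :=
          Real.rpow_le_rpow_of_exponent_le h1' (Nat.le_ceil κ)
        rw [Real.rpow_natCast] at hr
        have he : Real.exp (-Y * m) = (Real.exp (-Y)) ^ m := by
          rw [← Real.exp_nat_mul]; congr 1; ring
        rw [hfdef]; simp only
        rw [he]
        exact mul_le_mul_of_nonneg_right hr (pow_nonneg (Real.exp_pos _).le m)
    have hgeo : Summable (fun m : ℕ => (m:ℝ) ^ n * (Real.exp (-Y)) ^ m) := by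
      apply summable_pow_mul_geometric_of_norm_lt_one
      rw [Real.norm_eq_abs, abs_of_pos (Real.exp_pos _)]
      exact Real.exp_lt_one_iff.2 (by linarith)
    exact Summable.of_nonneg_of_le hf0 hmaj hgeo
  -- sets
  set A : Set ℕ := {m : ℕ | |(m : ℝ) - κ / Y| > Δ * κ / Y} with hA
  set S₁ : Set ℕ := {m : ℕ | (m:ℝ) < (1 - Δ) * (κ / Y)} with hS₁
  set S₂ : Set ℕ := {m : ℕ | (1 + Δ) * (κ / Y) < (m:ℝ)} with hS₂
  have hsum1 : Summable (S₁.indicator f) := hfsum.indicator S₁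
  have hsum2 : Summable (S₂.indicator f) := hfsum.indicator S₂
  have hsumA : Summable (A.indicator f) := hfsum.indicator A
  -- the goal tsum equals tsum of indicator
  have hgoal_eq : (∑' m : {m : ℕ // |(m : ℝ) - κ / Y| > Δ * κ / Y},
      ((m : ℕ) : ℝ) ^ κ * Real.exp (-Y * ((m : ℕ) : ℝ))) = ∑' m : ℕ, A.indicator f m :=
    tsum_subtype A f
  have hind0 : ∀ (s : Set ℕ) (m : ℕ), 0 ≤ s.indicator f m := fun s m =>
    Set.indicator_nonneg (fun i _ => hf0 i) m
  have hle : ∀ m : ℕ, A.indicator f m ≤ S₁.indicator f m + S₂.indicator f m := by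
    intro m
    by_cases hm : m ∈ A
    · rw [Set.indicator_of_mem hm]
      have habs : Δ * κ / Y < |(m : ℝ) - κ / Y| := hm
      rcases lt_abs.mp habs with h | h
      · have hmem : m ∈ S₂ := by
          rw [hS₂]
          simp only [Set.mem_setOf_eq]
          have : Δ * κ / Y = Δ * (κ / Y) := by ring
          nlinarith [this ▸ h]
        rw [Set.indicator_of_mem hmem]
        linarith [hind0 S₁ m]
      · have hmem : m ∈ S₁ := by
          rw [hS₁]
          simp only [Set.mem_setOf_eq]
          have : Δ * κ / Y = Δ * (κ / Y) := by ring
          nlinarith [this ▸ h]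
        rw [Set.indicator_of_mem hmem]
        linarith [hind0 S₂ m]
    · rw [Set.indicator_of_notMem hm]
      exact add_nonneg (hind0 S₁ m) (hind0 S₂ m)
  have hsplit : ∑' m : ℕ, A.indicator f m ≤
      (∑' m : ℕ, S₁.indicator f m) + ∑' m : ℕ, S₂.indicator f m := by
    rw [← Summable.tsum_add hsum1 hsum2]
    exact Summable.tsum_le_tsum hle hsumA (hsum1.add hsum2)
  -- P and E
  set P : ℝ := (κ / (Real.exp 1 * Y)) ^ κ with hPdef
  set E : ℝ := Real.exp (-Δ ^ 2 * κ / 4) with hEdef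
  have hbase : (0:ℝ) < κ / (Real.exp 1 * Y) := by positivity
  have hP : 0 < P := Real.rpow_pos_of_pos hbase κ
  have hE : 0 < E := Real.exp_pos _
  have hPE : P * E = Real.exp (κ * (Real.log (κ / Y) - 1) - Δ ^ 2 * κ / 4) := by
    rw [hPdef, hEdef, Real.rpow_def_of_pos hbase, ← Real.exp_add]
    congr 1
    have hlogb : Real.log (κ / (Real.exp 1 * Y)) = Real.log (κ / Y) - 1 := by
      rw [Real.log_div hκ.ne' (by positivity), Real.log_mul (Real.exp_pos 1).ne' hY.ne',
        Real.log_exp, Real.log_div hκ.ne' hY.ne']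
      ring
    rw [hlogb]
    ring
  -- Bound 1
  have hbound1 : ∑' m : ℕ, S₁.indicator f m ≤ (κ / Y) * (P * E) := by
    set N := ⌈(1 - Δ) * (κ / Y)⌉₊ with hN
    have hvanish : ∀ m ∉ Finset.Ico 1 N, S₁.indicator f m = 0 := by
      intro m hm
      rw [Finset.mem_Ico, not_and_or, not_le, not_lt] at hm
      rcases hm with h0 | hN'
      · interval_cases m
        by_cases h : (0:ℕ) ∈ S₁
        · rw [Set.indicator_of_mem h]; exact hfzero
        · exact Set.indicator_of_notMem h f
      · apply Set.indicator_of_notMem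
        rw [hS₁]
        simp only [Set.mem_setOf_eq, not_lt]
        calc (1 - Δ) * (κ / Y) ≤ (N : ℝ) := Nat.le_ceil _
        _ ≤ (m : ℝ) := by exact_mod_cast hN'
    have heq1 : ∑' m : ℕ, S₁.indicator f m = ∑ m ∈ Finset.Ico 1 N, S₁.indicator f m :=
      tsum_eq_sum hvanish
    have hterm : ∀ m ∈ Finset.Ico 1 N, S₁.indicator f m ≤ P * E := by
      intro m hm
      rw [Finset.mem_Ico] at hm
      by_cases hmem : m ∈ S₁
      · rw [Set.indicator_of_mem hmem]
        have hm1 : (0:ℝ) < m := by exact_mod_cast hm.1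
        have hxle : (m:ℝ) ≤ (1 - Δ) * (κ / Y) := le_of_lt hmem
        rw [hfexp m hm.1, hPE]
        exact Real.exp_le_exp.2 (left_exponent_bound hκ hY hΔ hΔ1 hm1 hxle)
      · rw [Set.indicator_of_notMem hmem]
        positivity
    have hsum_le := Finset.sum_le_card_nsmul _ _ _ hterm
    rw [Nat.card_Ico, nsmul_eq_mul] at hsum_le
    have hcard : ((N - 1 : ℕ) : ℝ) ≤ κ / Y := by
      rcases Nat.eq_zero_or_pos N with h | h
      · simp [h]; positivity
      · rw [Nat.cast_sub h]
        have hNlt : (N : ℝ) < (1 - Δ) * (κ / Y) + 1 :=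
          Nat.ceil_lt_add_one (by nlinarith)
        push_cast
        nlinarith
    calc ∑' m : ℕ, S₁.indicator f m = ∑ m ∈ Finset.Ico 1 N, S₁.indicator f m := heq1
    _ ≤ ((N - 1 : ℕ) : ℝ) * (P * E) := hsum_le
    _ ≤ (κ / Y) * (P * E) := mul_le_mul_of_nonneg_right hcard (by positivity)
  -- Bound 2
  set a : ℝ := Δ * Y / (1 + Δ) with hadef
  have ha : 0 < a := by
    rw [hadef]; positivity
  have hra : Real.exp (-a) < 1 := Real.exp_lt_one_iff.2 (by linarith)
  have hrpos : (0:ℝ) < 1 - Real.exp (-a) := by linarith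
  set s' : ℝ := (1 + Δ) * (κ / Y) with hs'def
  have hs' : 0 < s' := by rw [hs'def]; positivity
  set M := ⌈s'⌉₊ with hM
  have hM1 : 1 ≤ M := Nat.one_le_iff_ne_zero.2 (by
    simp only [hM, ne_eq, Nat.ceil_eq_zero, not_le]; exact hs')
  have hsM : s' ≤ (M:ℝ) := Nat.le_ceil _
  set X : ℝ := Real.exp (-(a * ((M:ℝ) - s'))) with hXdef
  have hX : 0 < X := Real.exp_pos _
  have hbound2 : ∑' m : ℕ, S₂.indicator f m ≤ P * E * X * (1 - Real.exp (-a))⁻¹ := by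
    have hzero : ∀ i ∈ Finset.range M, S₂.indicator f i = 0 := by
      intro i hi
      rw [Finset.mem_range] at hi
      apply Set.indicator_of_notMem
      rw [hS₂]
      simp only [Set.mem_setOf_eq, not_lt]
      exact le_of_lt (Nat.lt_ceil.1 hi)
    have hshift := Summable.sum_add_tsum_nat_add M hsum2
    rw [Finset.sum_eq_zero hzero, zero_add] at hshift
    rw [← hshift]
    have hterm2 : ∀ i : ℕ, S₂.indicator f (i + M) ≤
        (P * E * X) * (Real.exp (-a)) ^ i := by
      intro i
      by_cases hmem : (i + M : ℕ) ∈ S₂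
      · rw [Set.indicator_of_mem hmem]
        have hgt : (1 + Δ) * (κ / Y) < ((i + M : ℕ) : ℝ) := hmem
        have hexp := right_exponent_bound hκ hY hΔ hΔ1 hgt
        rw [hfexp _ (le_trans hM1 (Nat.le_add_left M i))]
        have hrhs : (P * E * X) * (Real.exp (-a)) ^ i =
            Real.exp (κ * (Real.log (κ / Y) - 1) - Δ ^ 2 * κ / 4
              - a * (((i + M : ℕ) : ℝ) - s')) := by
          rw [hPE, hXdef, ← Real.exp_nat_mul, ← Real.exp_add, ← Real.exp_add]
          congr 1
          push_cast
          ring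
        rw [hrhs]
        apply Real.exp_le_exp.2
        rw [hadef, hs'def]
        exact hexp
      · rw [Set.indicator_of_notMem hmem]
        positivity
    have hgeo : Summable (fun i : ℕ => (P * E * X) * (Real.exp (-a)) ^ i) :=
      (summable_geometric_of_lt_one (Real.exp_pos _).le hra).mul_left _
    calc ∑' i : ℕ, S₂.indicator f (i + M) ≤ ∑' i : ℕ, (P * E * X) * (Real.exp (-a)) ^ i :=
      Summable.tsum_le_tsum hterm2 ((summable_nat_add_iff M).2 hsum2) hgeo
    _ = (P * E * X) * (1 - Real.exp (-a))⁻¹ := by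
      rw [tsum_mul_left, tsum_geometric_of_lt_one (Real.exp_pos _).le hra]
  have hQ : X * (1 - Real.exp (-a))⁻¹ ≤ 4 * (κ / Y) + 2 / (Δ * Y) :=
    aux_Qbound hY hΔ hΔ1 hm₀ hadef hs'def hsM hM1
      (fun h => Nat.ceil_le.2 (by rw [Nat.cast_one]; exact h)) hXdef
  have hkey := aux_key (κ := κ) hY hΔ hκ
  have hPE0 : (0:ℝ) ≤ P * E := (mul_pos hP hE).le
  calc (∑' m : {m : ℕ // |(m : ℝ) - κ / Y| > Δ * κ / Y},
          ((m : ℕ) : ℝ) ^ κ * Real.exp (-Y * ((m : ℕ) : ℝ)))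
      = ∑' m : ℕ, A.indicator f m := hgoal_eq
    _ ≤ (∑' m : ℕ, S₁.indicator f m) + ∑' m : ℕ, S₂.indicator f m := hsplit
    _ ≤ (κ / Y) * (P * E) + P * E * X * (1 - Real.exp (-a))⁻¹ := add_le_add hbound1 hbound2
    _ ≤ (κ / Y) * (P * E) + (P * E) * (4 * (κ / Y) + 2 / (Δ * Y)) := by
        refine add_le_add_right ?_ _
        rw [mul_assoc]
        exact mul_le_mul_of_nonneg_left hQ hPE0
    _ = ((κ / Y) + (4 * (κ / Y) + 2 / (Δ * Y))) * (P * E) := by ring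
    _ ≤ (5 * (1 / Δ + κ) * (1 / Y)) * (P * E) := mul_le_mul_of_nonneg_right hkey hPE0
    _ = 5 * (1 / Δ + κ) * (1 / Y) * P * E := by ring
end
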